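/- Let G be a simple graph on n ≥ 1 vertices with m edges, let E_k = (1/2)E_{i_k j_k} + (1/2)E_{j_k i_k} for the k-th edge {i_k,j_k} of G, and for a positive integer ℓ define T_ℓ := max over unit vectors u, v ∈ ℝ^n and w ∈ ℝ^{ℓ+2m} of Σ_{i=1}^{ℓ} (u^T (ℓ^{−1} I) v) w_i + Σ_{k=1}^{m} (u^T E_k v) w_{ℓ+k} + Σ_{k=1}^{m} (u^T E_k v) w_{ℓ+m+k}, and M_ℓ := max_{‖u‖₂=1} { Σ_{i=1}^{ℓ} (u^T (ℓ^{−1} I) u)² + 2 Σ_{k=1}^{m} (u^T E_k u)² }. Then T_ℓ = M_ℓ^{1/2}. -/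

import Mathlib

open Matrix Finset

section aux

variable {n : ℕ}

lemma sym_dot (A : Matrix (Fin n) (Fin n) ℝ) (hA : Aᵀ = A) (p q : Fin n → ℝ) :
    p ⬝ᵥ A *ᵥ q = q ⬝ᵥ A *ᵥ p := by
  have h : ∀ i j, A i j = A j i := by
    intro i j; conv_lhs => rw [← hA, Matrix.transpose_apply]
  simp only [dotProduct, mulVec, Finset.mul_sum]
  rw [Finset.sum_comm]
  exact Finset.sum_congr rfl fun i _ => Finset.sum_congr rfl fun j _ => by
    rw [h j i]; ring

lemma sum_sq_zero {ι : Type*} [Fintype ι] (p : ι → ℝ) (h : (∑ j, p j ^ 2) = 0) :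
    p = 0 := by
  funext j
  have := (Finset.sum_eq_zero_iff_of_nonneg (fun i _ => sq_nonneg (p i))).1 h j (Finset.mem_univ j)
  exact pow_eq_zero_iff (n := 2) (by norm_num) |>.1 this

lemma key {ι : Type*} [Fintype ι] (A : ι → Matrix (Fin n) (Fin n) ℝ)
    (hA : ∀ i, (A i)ᵀ = A i) (M : ℝ)
    (hM : ∀ p : Fin n → ℝ, (∑ j, p j ^ 2) = 1 → (∑ i, (p ⬝ᵥ (A i) *ᵥ p) ^ 2) ≤ M)
    (u v : Fin n → ℝ) (w : ι → ℝ) (hu : (∑ j, u j ^ 2) = 1) (hv : (∑ j, v j ^ 2) = 1)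
    (hw : (∑ i, w i ^ 2) = 1) :
    (∑ i, (u ⬝ᵥ (A i) *ᵥ v) * w i) ≤ Real.sqrt M := by
  -- homogeneous bound
  have step : ∀ p : Fin n → ℝ,
      |∑ i, (p ⬝ᵥ (A i) *ᵥ p) * w i| ≤ (∑ j, p j ^ 2) * Real.sqrt M := by
    intro p
    set s := ∑ j, p j ^ 2 with hs
    have hs0 : 0 ≤ s := Finset.sum_nonneg fun i _ => sq_nonneg _
    have hsum_sq : (∑ i, (p ⬝ᵥ (A i) *ᵥ p) ^ 2) ≤ s ^ 2 * M := by
      rcases eq_or_lt_of_le hs0 with h0 | hpos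
      · have hp0 : p = 0 := sum_sq_zero p h0.symm
        subst hp0
        simp [← h0]
      · set q : Fin n → ℝ := (Real.sqrt s)⁻¹ • p with hq
        have hsq : Real.sqrt s ^ 2 = s := Real.sq_sqrt hs0
        have hsqpos : 0 < Real.sqrt s := Real.sqrt_pos.2 hpos
        have hqu : (∑ j, q j ^ 2) = 1 := by
          simp only [hq, Pi.smul_apply, smul_eq_mul, mul_pow, ← Finset.mul_sum]
          rw [← hs]
          field_simp
          exact hsq.symm
        have := hM q hqu
        have hqc : ∀ i, q ⬝ᵥ (A i) *ᵥ q = s⁻¹ * (p ⬝ᵥ (A i) *ᵥ p) := by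
          intro i
          simp only [hq, smul_dotProduct, Matrix.mulVec_smul, dotProduct_smul, smul_eq_mul]
          rw [← mul_assoc, ← sq]
          rw [← Real.sqrt_inv, Real.sq_sqrt (inv_nonneg.2 hs0)]
        rw [Finset.sum_congr rfl (fun i _ => by rw [hqc i, mul_pow])] at this
        rw [← Finset.mul_sum] at this
        have hsne : s ≠ 0 := ne_of_gt hpos
        calc (∑ i, (p ⬝ᵥ (A i) *ᵥ p) ^ 2)
            = s ^ 2 * ((s⁻¹) ^ 2 * ∑ i, (p ⬝ᵥ (A i) *ᵥ p) ^ 2) := by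
              field_simp
          _ ≤ s ^ 2 * M := by
              apply mul_le_mul_of_nonneg_left this (sq_nonneg s)
    have cs := Real.sum_mul_le_sqrt_mul_sqrt Finset.univ (fun i => p ⬝ᵥ (A i) *ᵥ p) w
    have cs' := Real.sum_mul_le_sqrt_mul_sqrt Finset.univ (fun i => -(p ⬝ᵥ (A i) *ᵥ p)) w
    have hwsqrt : Real.sqrt (∑ i, w i ^ 2) = 1 := by rw [hw, Real.sqrt_one]
    have hbound : Real.sqrt (∑ i, (p ⬝ᵥ (A i) *ᵥ p) ^ 2) ≤ s * Real.sqrt M := by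
      calc Real.sqrt (∑ i, (p ⬝ᵥ (A i) *ᵥ p) ^ 2)
          ≤ Real.sqrt (s ^ 2 * M) := Real.sqrt_le_sqrt hsum_sq
        _ = s * Real.sqrt M := by
            rw [Real.sqrt_mul (sq_nonneg s), Real.sqrt_sq hs0]
    rw [abs_le]
    constructor
    · have : (∑ i, -(p ⬝ᵥ (A i) *ᵥ p) * w i) ≤ s * Real.sqrt M := by
        refine cs'.trans ?_
        rw [hwsqrt, mul_one]
        simpa [neg_pow] using hbound
      simp only [neg_mul, Finset.sum_neg_distrib] at this
      linarith
    · refine cs.trans ?_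
      rw [hwsqrt, mul_one]
      exact hbound
  -- polarization
  have hpol : ∀ i : ι, ((u + v) ⬝ᵥ (A i) *ᵥ (u + v)) - ((u - v) ⬝ᵥ (A i) *ᵥ (u - v))
      = 4 * (u ⬝ᵥ (A i) *ᵥ v) := by
    intro i
    have hsym := sym_dot (A i) (hA i) v u
    simp only [Matrix.mulVec_add, Matrix.mulVec_sub, add_dotProduct, sub_dotProduct,
      dotProduct_add, dotProduct_sub]
    linarith
  have hsum4 : (∑ j, (u + v) j ^ 2) + (∑ j, (u - v) j ^ 2) = 4 := by
    have : (∑ j, ((u + v) j ^ 2 + (u - v) j ^ 2)) = ∑ j, (2 * u j ^ 2 + 2 * v j ^ 2) :=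
      Finset.sum_congr rfl fun j _ => by simp [Pi.add_apply, Pi.sub_apply]; ring
    rw [Finset.sum_add_distrib] at this
    rw [Finset.sum_add_distrib, ← Finset.mul_sum, ← Finset.mul_sum, hu, hv] at this
    linarith [this]
  have h1 := step (u + v)
  have h2 := step (u - v)
  have e1 : (∑ i, ((u + v) ⬝ᵥ (A i) *ᵥ (u + v)) * w i)
      ≤ (∑ j, (u + v) j ^ 2) * Real.sqrt M := (abs_le.1 h1).2
  have e2 : -((∑ j, (u - v) j ^ 2) * Real.sqrt M)
      ≤ (∑ i, ((u - v) ⬝ᵥ (A i) *ᵥ (u - v)) * w i) := (abs_le.1 h2).1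
  have hsplit : 4 * (∑ i, (u ⬝ᵥ (A i) *ᵥ v) * w i)
      = (∑ i, ((u + v) ⬝ᵥ (A i) *ᵥ (u + v)) * w i)
        - (∑ i, ((u - v) ⬝ᵥ (A i) *ᵥ (u - v)) * w i) := by
    rw [Finset.mul_sum, ← Finset.sum_sub_distrib]
    exact Finset.sum_congr rfl fun i _ => by linear_combination (-(w i)) * (hpol i)
  nlinarith [Real.sqrt_nonneg M, hsum4, e1, e2, hsplit]

end aux

lemma std_transpose {n : ℕ} (i j : Fin n) (c : ℝ) :
    (Matrix.single i j c)ᵀ = Matrix.single j i c := by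
  ext a b
  simp only [Matrix.transpose_apply, Matrix.single, Matrix.of_apply]
  by_cases h1 : i = b <;> by_cases h2 : j = a <;> simp [h1, h2]

lemma sphere_isCompact {ι : Type*} [Fintype ι] :
    IsCompact {p : ι → ℝ | (∑ i, p i ^ 2) = 1} := by
  apply Metric.isCompact_of_isClosed_isBounded
  · exact isClosed_eq (by continuity) continuous_const
  · apply Bornology.IsBounded.subset (Metric.isBounded_closedBall (x := (0 : ι → ℝ)) (r := 1))
    intro p hp
    simp only [Set.mem_setOf_eq] at hp
    simp only [Metric.mem_closedBall, dist_zero_right]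
    rcases isEmpty_or_nonempty ι with h | h
    · exact absurd hp (by simp)
    · rw [pi_norm_le_iff_of_nonneg zero_le_one]
      intro i
      rw [Real.norm_eq_abs, ← sq_le_one_iff_abs_le_one]
      calc p i ^ 2 ≤ ∑ j, p j ^ 2 :=
            Finset.single_le_sum (fun j _ => sq_nonneg (p j)) (Finset.mem_univ i)
        _ = 1 := hp

lemma sphere_nonempty {ι : Type*} [Fintype ι] [Nonempty ι] :
    {p : ι → ℝ | (∑ i, p i ^ 2) = 1}.Nonempty := by
  classical
  obtain ⟨i0⟩ := ‹Nonempty ι›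
  refine ⟨fun j => if j = i0 then 1 else 0, ?_⟩
  simp [apply_ite (· ^ 2 : ℝ → ℝ), Finset.sum_ite_eq']

lemma cont_dot {n : ℕ} (C : Matrix (Fin n) (Fin n) ℝ) :
    Continuous fun p : (Fin n → ℝ) × (Fin n → ℝ) => p.1 ⬝ᵥ C *ᵥ p.2 := by
  simp only [dotProduct, mulVec]
  apply continuous_finset_sum
  intro i _
  exact ((continuous_apply i).comp continuous_fst).mul
    (continuous_finset_sum _ fun j _ => continuous_const.mul
      ((continuous_apply j).comp continuous_snd))

/-- `T_ℓ = M_ℓ^{1/2}`, where `T_ℓ` is the maximum of the trilinear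
form (over unit vectors `u, v ∈ ℝⁿ` and `w ∈ ℝ^{ℓ+2m}`) and `M_ℓ` is the maximum
of the quadratic sum-of-squares over a single unit vector. -/
theorem stmt_8 (n m : ℕ) (hn : 1 ≤ n) (G : SimpleGraph (Fin n)) [DecidableRel G.Adj]
    (a b : Fin m → Fin n)
    (hab : ∀ k, G.Adj (a k) (b k))
    (hinj : Function.Injective fun k => s(a k, b k))
    (hsurj : ∀ e ∈ G.edgeFinset, ∃ k, s(a k, b k) = e)
    (E : Fin m → Matrix (Fin n) (Fin n) ℝ)
    (hE : ∀ k, E k = (1/2 : ℝ) • Matrix.single (a k) (b k) 1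
                   + (1/2 : ℝ) • Matrix.single (b k) (a k) 1)
    (ℓ : ℕ) (hℓ : 0 < ℓ) :
    ∃ T M : ℝ,
      IsGreatest
        {y : ℝ | ∃ (u v : Fin n → ℝ) (w : Fin ℓ ⊕ Fin m ⊕ Fin m → ℝ),
          (∑ i, u i ^ 2) = 1 ∧ (∑ i, v i ^ 2) = 1 ∧ (∑ i, w i ^ 2) = 1 ∧
          y = (∑ i : Fin ℓ,
                (u ⬝ᵥ ((ℓ : ℝ)⁻¹ • (1 : Matrix (Fin n) (Fin n) ℝ)).mulVec v)
                  * w (Sum.inl i))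
            + (∑ k, (u ⬝ᵥ (E k).mulVec v) * w (Sum.inr (Sum.inl k)))
            + (∑ k, (u ⬝ᵥ (E k).mulVec v) * w (Sum.inr (Sum.inr k)))} T ∧
      IsGreatest
        {y : ℝ | ∃ u : Fin n → ℝ, (∑ i, u i ^ 2) = 1 ∧
          y = (∑ _i : Fin ℓ,
                (u ⬝ᵥ ((ℓ : ℝ)⁻¹ • (1 : Matrix (Fin n) (Fin n) ℝ)).mulVec u) ^ 2)
            + 2 * ∑ k, (u ⬝ᵥ (E k).mulVec u) ^ 2} M ∧
      T = Real.sqrt M := by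
  classical
  set A : (Fin ℓ ⊕ Fin m ⊕ Fin m) → Matrix (Fin n) (Fin n) ℝ :=
    Sum.elim (fun _ => (ℓ : ℝ)⁻¹ • (1 : Matrix (Fin n) (Fin n) ℝ)) (Sum.elim E E) with hAdef
  have hA : ∀ i, (A i)ᵀ = A i := by
    rintro (i | k | k)
    · simp [hAdef, Matrix.transpose_smul]
    all_goals
      simp only [hAdef, Sum.elim_inl, Sum.elim_inr, hE, Matrix.transpose_add,
        Matrix.transpose_smul, std_transpose]
      exact add_comm _ _
  -- expression rewrites
  have hTexpr : ∀ (u v : Fin n → ℝ) (w : Fin ℓ ⊕ Fin m ⊕ Fin m → ℝ),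
      (∑ i : Fin ℓ,
          (u ⬝ᵥ ((ℓ : ℝ)⁻¹ • (1 : Matrix (Fin n) (Fin n) ℝ)).mulVec v) * w (Sum.inl i))
        + (∑ k, (u ⬝ᵥ (E k).mulVec v) * w (Sum.inr (Sum.inl k)))
        + (∑ k, (u ⬝ᵥ (E k).mulVec v) * w (Sum.inr (Sum.inr k)))
      = ∑ i, (u ⬝ᵥ (A i) *ᵥ v) * w i := by
    intro u v w
    rw [Fintype.sum_sum_type, Fintype.sum_sum_type]
    simp only [hAdef, Sum.elim_inl, Sum.elim_inr]
    ring
  have hMexpr : ∀ u : Fin n → ℝ,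
      (∑ _i : Fin ℓ,
          (u ⬝ᵥ ((ℓ : ℝ)⁻¹ • (1 : Matrix (Fin n) (Fin n) ℝ)).mulVec u) ^ 2)
        + 2 * ∑ k, (u ⬝ᵥ (E k).mulVec u) ^ 2
      = ∑ i, (u ⬝ᵥ (A i) *ᵥ u) ^ 2 := by
    intro u
    rw [Fintype.sum_sum_type, Fintype.sum_sum_type]
    simp only [hAdef, Sum.elim_inl, Sum.elim_inr]
    ring
  -- the two sets
  set S1 : Set ℝ :=
    {y : ℝ | ∃ (u v : Fin n → ℝ) (w : Fin ℓ ⊕ Fin m ⊕ Fin m → ℝ),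
      (∑ i, u i ^ 2) = 1 ∧ (∑ i, v i ^ 2) = 1 ∧ (∑ i, w i ^ 2) = 1 ∧
      y = (∑ i : Fin ℓ,
            (u ⬝ᵥ ((ℓ : ℝ)⁻¹ • (1 : Matrix (Fin n) (Fin n) ℝ)).mulVec v) * w (Sum.inl i))
        + (∑ k, (u ⬝ᵥ (E k).mulVec v) * w (Sum.inr (Sum.inl k)))
        + (∑ k, (u ⬝ᵥ (E k).mulVec v) * w (Sum.inr (Sum.inr k)))} with hS1def
  set S2 : Set ℝ :=
    {y : ℝ | ∃ u : Fin n → ℝ, (∑ i, u i ^ 2) = 1 ∧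
      y = (∑ _i : Fin ℓ,
            (u ⬝ᵥ ((ℓ : ℝ)⁻¹ • (1 : Matrix (Fin n) (Fin n) ℝ)).mulVec u) ^ 2)
        + 2 * ∑ k, (u ⬝ᵥ (E k).mulVec u) ^ 2} with hS2def
  have hnle : Nonempty (Fin n) := ⟨⟨0, hn⟩⟩
  have hle : Nonempty (Fin ℓ ⊕ Fin m ⊕ Fin m) := ⟨Sum.inl ⟨0, hℓ⟩⟩
  -- S2 as image of the sphere
  have hS2img : S2 = (fun u : Fin n → ℝ => ∑ i, (u ⬝ᵥ (A i) *ᵥ u) ^ 2) ''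
      {u : Fin n → ℝ | (∑ i, u i ^ 2) = 1} := by
    ext y
    constructor
    · rintro ⟨u, hu, rfl⟩
      exact ⟨u, hu, (hMexpr u).symm⟩
    · rintro ⟨u, hu, rfl⟩
      exact ⟨u, hu, (hMexpr u).symm⟩
  have hgcont : Continuous fun u : Fin n → ℝ => ∑ i, (u ⬝ᵥ (A i) *ᵥ u) ^ 2 := by
    apply continuous_finset_sum
    intro i _
    exact (((cont_dot (A i)).comp (continuous_id.prodMk continuous_id))).pow 2
  obtain ⟨M, hMmem, hMub⟩ :=
    ((sphere_isCompact.image hgcont).exists_isGreatest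
      ((sphere_nonempty (ι := Fin n)).image _))
  rw [← hS2img] at hMmem hMub
  -- S1 as image
  have hfcont : Continuous fun p : (Fin n → ℝ) × (Fin n → ℝ) × ((Fin ℓ ⊕ Fin m ⊕ Fin m) → ℝ) =>
      ∑ i, (p.1 ⬝ᵥ (A i) *ᵥ p.2.1) * p.2.2 i := by
    apply continuous_finset_sum
    intro i _
    exact ((cont_dot (A i)).comp
        (continuous_fst.prodMk (continuous_fst.comp continuous_snd))).mul
      ((continuous_apply i).comp (continuous_snd.comp continuous_snd))
  have hS1img : S1 = (fun p : (Fin n → ℝ) × (Fin n → ℝ) × ((Fin ℓ ⊕ Fin m ⊕ Fin m) → ℝ) =>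
      ∑ i, (p.1 ⬝ᵥ (A i) *ᵥ p.2.1) * p.2.2 i) ''
      ({u : Fin n → ℝ | (∑ i, u i ^ 2) = 1} ×ˢ {v : Fin n → ℝ | (∑ i, v i ^ 2) = 1} ×ˢ
        {w : (Fin ℓ ⊕ Fin m ⊕ Fin m) → ℝ | (∑ i, w i ^ 2) = 1}) := by
    ext y
    constructor
    · rintro ⟨u, v, w, hu, hv, hw, rfl⟩
      exact ⟨(u, v, w), ⟨hu, hv, hw⟩, (hTexpr u v w).symm⟩
    · rintro ⟨⟨u, v, w⟩, ⟨hu, hv, hw⟩, rfl⟩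
      exact ⟨u, v, w, hu, hv, hw, (hTexpr u v w).symm⟩
  obtain ⟨T, hTmem, hTub⟩ :=
    (((sphere_isCompact.prod (sphere_isCompact.prod sphere_isCompact)).image
      hfcont).exists_isGreatest
      ((sphere_nonempty.prod (sphere_nonempty.prod sphere_nonempty)).image _))
  rw [← hS1img] at hTmem hTub
  refine ⟨T, M, ⟨hTmem, hTub⟩, ⟨hMmem, hMub⟩, ?_⟩
  -- upper bounds for the key lemma
  have hMbound : ∀ p : Fin n → ℝ, (∑ j, p j ^ 2) = 1 → (∑ i, (p ⬝ᵥ (A i) *ᵥ p) ^ 2) ≤ M := by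
    intro p hp
    exact hMub ⟨p, hp, (hMexpr p).symm⟩
  -- T ≤ √M
  have hTle : T ≤ Real.sqrt M := by
    obtain ⟨u, v, w, hu, hv, hw, hy⟩ := hTmem
    rw [hy, hTexpr u v w]
    exact key A hA M hMbound u v w hu hv hw
  -- √M ≤ T
  obtain ⟨u0, hu0, hMu0⟩ := hMmem
  rw [hMexpr u0] at hMu0
  have hM0 : 0 ≤ M := hMu0 ▸ Finset.sum_nonneg fun i _ => sq_nonneg _
  have hMgeT : Real.sqrt M ≤ T := by
    rcases eq_or_lt_of_le hM0 with h0 | hpos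
    · -- M = 0 : need 0 ≤ T
      rw [← h0, Real.sqrt_zero]
      obtain ⟨u, v, w, hu, hv, hw, hy⟩ := hTmem
      have hneg : -T ∈ S1 := by
        refine ⟨u, -v, w, hu, by simpa using hv, hw, ?_⟩
        rw [hy]
        simp only [Matrix.mulVec_neg, dotProduct_neg, neg_mul, Finset.sum_neg_distrib]
        ring
      have := hTub hneg
      linarith
    · set c : (Fin ℓ ⊕ Fin m ⊕ Fin m) → ℝ := fun i => u0 ⬝ᵥ (A i) *ᵥ u0 with hc
      have hsqM : Real.sqrt M ^ 2 = M := Real.sq_sqrt hM0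
      have hsqpos : 0 < Real.sqrt M := Real.sqrt_pos.2 hpos
      have hwunit : (∑ i, ((Real.sqrt M)⁻¹ * c i) ^ 2) = 1 := by
        simp only [mul_pow, ← Finset.mul_sum]
        rw [← hMu0]
        field_simp
        exact hsqM.symm
      apply hTub
      set w0 : (Fin ℓ ⊕ Fin m ⊕ Fin m) → ℝ := fun i => (Real.sqrt M)⁻¹ * c i with hw0
      refine ⟨u0, u0, w0, hu0, hu0, hwunit, ?_⟩
      rw [hTexpr]
      have hsum : (∑ i, (u0 ⬝ᵥ (A i) *ᵥ u0) * w0 i)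
          = (∑ i, (u0 ⬝ᵥ (A i) *ᵥ u0) ^ 2) * (Real.sqrt M)⁻¹ := by
        rw [Finset.sum_mul]
        exact Finset.sum_congr rfl fun i _ => by simp only [hw0, hc]; ring
      rw [hsum, ← hMu0, ← div_eq_mul_inv, Real.div_sqrt]
  exact le_antisymm hTle hMgeT
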